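/- For every natural number N, the product of all primes p ≤ N satisfies ∏_{p ≤ N} p < 4^N. -/

import Mathlib

lemma squarefree_prod_primes (s : Finset ℕ) (hs : ∀ p ∈ s, p.Prime) :
    Squarefree (∏ p ∈ s, p) := by
  classical
  induction s using Finset.induction_on with
  | empty => simp
  | @insert a s ha ih =>
    rw [Finset.prod_insert ha]
    have hap : a.Prime := hs a (Finset.mem_insert_self a s)
    have hrest : Squarefree (∏ p ∈ s, p) := ih fun p hp => hs p (Finset.mem_insert_of_mem hp)
    have hcop : Nat.Coprime a (∏ p ∈ s, p) := by
      rw [hap.coprime_iff_not_dvd]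
      intro hdvd
      obtain ⟨q, hq, hdq⟩ := (Nat.Prime.prime hap).exists_mem_finset_dvd hdvd
      have : q = a := ((hs q (Finset.mem_insert_of_mem hq)).dvd_iff_eq hap.ne_one).1 hdq
      exact ha (this.symm ▸ hq)
    exact (Nat.squarefree_mul hcop).2 ⟨hap.squarefree, hrest⟩

namespace Primorial

/-- The primorial bound: the product of all primes `p ≤ N` is less than `4^N`
(for `N ≥ 1`; for `N = 0` both sides are `1`). -/
theorem primorial_lt_four_pow (N : ℕ) (hN : 1 ≤ N) :
    ∏ p ∈ Finset.filter Nat.Prime (Finset.range (N + 1)), p < 4^N := by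
  have hle : ∏ p ∈ Finset.filter Nat.Prime (Finset.range (N + 1)), p ≤ 4 ^ N :=
    primorial_le_4_pow N
  refine lt_of_le_of_ne hle fun heq => ?_
  have hsf : Squarefree (∏ p ∈ Finset.filter Nat.Prime (Finset.range (N + 1)), p) :=
    squarefree_prod_primes _ fun p hp => (Finset.mem_filter.1 hp).2
  have h4 : (2 * 2 : ℕ) ∣ 4 ^ N := by
    have : (4 : ℕ) ∣ 4 ^ N := dvd_pow_self 4 (by omega)
    simpa using this
  rw [← heq] at h4
  exact Nat.prime_two.not_isUnit (hsf 2 h4)
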